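/- Let n₁ be a nonzero integer. Define r⁰⁰(z) = z·(−512z⁴ + 48z² − 15), r⁰¹(z) = r¹⁰(z) = −(128z⁴ + 12z² + 15), and r¹¹(z) = (512z⁶ + 16z⁴ + 33z² − 15)/z. Then the function f(y) = (32π·σ₂(|n₁|)²/(315·|n₁|³)) · ∑_{i,j ∈ {0,1}} r^{ij}(π|n₁|y)·K_i(2π|n₁|y)·K_j(2π|n₁|y) satisfies y²·f''(y) − 12·f(y) = −64π²·y·(σ₂(|n₁|)²/n₁²)·K₁(2π|n₁|y)² for all y > 0. -/

import Mathlib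

open Real

/-- Modified Bessel function `K₀`. -/
noncomputable def K0 (x : ℝ) : ℝ := ∫ t in Set.Ioi (0 : ℝ), Real.exp (-x * Real.cosh t)

/-- Modified Bessel function `K₁`. -/
noncomputable def K1 (x : ℝ) : ℝ :=
  ∫ t in Set.Ioi (0 : ℝ), Real.exp (-x * Real.cosh t) * Real.cosh t

/-- Divisor sum `σ₂(m) = ∑_{d ∣ m} d²`. -/
def sigma2 (m : ℕ) : ℕ := ∑ d ∈ m.divisors, d ^ 2

/-- The coefficient `r⁰⁰`. -/
noncomputable def r00 (z : ℝ) : ℝ := z * (-512 * z ^ 4 + 48 * z ^ 2 - 15)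

/-- The coefficient `r⁰¹ = r¹⁰`. -/
noncomputable def r01 (z : ℝ) : ℝ := -(128 * z ^ 4 + 12 * z ^ 2 + 15)

/-- The coefficient `r¹¹`. -/
noncomputable def r11 (z : ℝ) : ℝ := (512 * z ^ 6 + 16 * z ^ 4 + 33 * z ^ 2 - 15) / z

/-- The particular solution `f̂^P_{n₁,-n₁}`. -/
noncomputable def fPdiag (n₁ : ℤ) (y : ℝ) : ℝ :=
  32 * π * (sigma2 n₁.natAbs : ℝ) ^ 2 / (315 * |(n₁ : ℝ)| ^ 3) *
    (r00 (π * |(n₁ : ℝ)| * y) * K0 (2 * π * |(n₁ : ℝ)| * y) * K0 (2 * π * |(n₁ : ℝ)| * y) +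
      r01 (π * |(n₁ : ℝ)| * y) * K0 (2 * π * |(n₁ : ℝ)| * y) * K1 (2 * π * |(n₁ : ℝ)| * y) +
      r01 (π * |(n₁ : ℝ)| * y) * K1 (2 * π * |(n₁ : ℝ)| * y) * K0 (2 * π * |(n₁ : ℝ)| * y) +
      r11 (π * |(n₁ : ℝ)| * y) * K1 (2 * π * |(n₁ : ℝ)| * y) * K1 (2 * π * |(n₁ : ℝ)| * y))

/-! ### Auxiliary development: derivatives of `K0` and `K1`. -/

open MeasureTheory Set Filter Metric Topology

/-- The family of integrals `∫ e^{-x cosh t} cosh^k t`. -/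
noncomputable def Ibes (k : ℕ) (x : ℝ) : ℝ :=
  ∫ t in Set.Ioi (0 : ℝ), Real.exp (-x * Real.cosh t) * Real.cosh t ^ k

lemma le_cosh {t : ℝ} (ht : 0 ≤ t) : t ≤ Real.cosh t := by
  rcases eq_or_lt_of_le ht with h | h
  · rw [← h]; norm_num [Real.cosh_zero]
  · exact le_trans (Real.self_lt_sinh_iff.mpr h).le (Real.sinh_lt_cosh t).le

lemma bound_aux (k : ℕ) {b t : ℝ} (hb : 0 < b) (ht : 0 ≤ t) :
    Real.cosh t ^ k * Real.exp (-b * Real.cosh t) ≤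
      (2 * (k : ℝ) / b) ^ k * Real.exp (-(b / 2) * t) := by
  have h1 : (1 : ℝ) ≤ Real.cosh t := Real.one_le_cosh t
  have hct : t ≤ Real.cosh t := le_cosh ht
  have h2 : Real.cosh t ^ k ≤ (2 * (k : ℝ) / b) ^ k * Real.exp ((b / 2) * Real.cosh t) := by
    rcases Nat.eq_zero_or_pos k with rfl | hk
    · simpa using Real.one_le_exp (by positivity : (0:ℝ) ≤ b / 2 * Real.cosh t)
    · have hk' : (0 : ℝ) < (k : ℝ) := by exact_mod_cast hk
      have step : Real.cosh t ≤ (2 * (k : ℝ) / b) * Real.exp ((b / (2 * k)) * Real.cosh t) := by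
        have h3 : (b / (2 * k)) * Real.cosh t ≤ Real.exp ((b / (2 * k)) * Real.cosh t) :=
          (lt_of_lt_of_le (lt_add_one _) (Real.add_one_le_exp _)).le
        calc Real.cosh t = (2 * (k : ℝ) / b) * ((b / (2 * k)) * Real.cosh t) := by
              field_simp
          _ ≤ (2 * (k : ℝ) / b) * Real.exp ((b / (2 * k)) * Real.cosh t) :=
              mul_le_mul_of_nonneg_left h3 (by positivity)
      calc Real.cosh t ^ k ≤ ((2 * (k : ℝ) / b) * Real.exp ((b / (2 * k)) * Real.cosh t)) ^ k :=
            pow_le_pow_left₀ (by positivity) step k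
        _ = (2 * (k : ℝ) / b) ^ k * (Real.exp ((b / (2 * k)) * Real.cosh t)) ^ k := mul_pow _ _ _
        _ = (2 * (k : ℝ) / b) ^ k * Real.exp ((b / 2) * Real.cosh t) := by
            rw [← Real.exp_nat_mul]
            congr 1
            field_simp
  calc Real.cosh t ^ k * Real.exp (-b * Real.cosh t)
      ≤ ((2 * (k : ℝ) / b) ^ k * Real.exp ((b / 2) * Real.cosh t)) * Real.exp (-b * Real.cosh t) :=
        mul_le_mul_of_nonneg_right h2 (Real.exp_pos _).le
    _ = (2 * (k : ℝ) / b) ^ k * Real.exp (-(b / 2) * Real.cosh t) := by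
        rw [mul_assoc, ← Real.exp_add, show (b / 2) * Real.cosh t + -b * Real.cosh t
          = -(b / 2) * Real.cosh t by ring]
    _ ≤ (2 * (k : ℝ) / b) ^ k * Real.exp (-(b / 2) * t) := by
        refine mul_le_mul_of_nonneg_left (Real.exp_le_exp.mpr ?_) (by positivity)
        nlinarith

lemma integrableOn_aux (k : ℕ) {x : ℝ} (hx : 0 < x) :
    IntegrableOn (fun t => Real.exp (-x * Real.cosh t) * Real.cosh t ^ k) (Set.Ioi 0) := by
  have hi : IntegrableOn (fun t => (2 * (k : ℝ) / x) ^ k * Real.exp (-(x / 2) * t)) (Set.Ioi 0) :=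
    (exp_neg_integrableOn_Ioi 0 (half_pos hx)).const_mul _
  refine hi.mono' (Continuous.aestronglyMeasurable (by fun_prop)) ?_
  rw [ae_restrict_iff' measurableSet_Ioi]
  refine ae_of_all _ fun t ht => ?_
  have ht' : (0 : ℝ) < t := ht
  rw [Real.norm_eq_abs, abs_of_pos (by positivity)]
  calc Real.exp (-x * Real.cosh t) * Real.cosh t ^ k
      = Real.cosh t ^ k * Real.exp (-x * Real.cosh t) := by ring
    _ ≤ _ := bound_aux k hx ht'.le

lemma hasDerivAt_Ibes (k : ℕ) {x : ℝ} (hx : 0 < x) :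
    HasDerivAt (Ibes k) (-Ibes (k + 1) x) x := by
  have key := hasDerivAt_integral_of_dominated_loc_of_deriv_le
    (μ := volume.restrict (Set.Ioi (0 : ℝ)))
    (F := fun z t => Real.exp (-z * Real.cosh t) * Real.cosh t ^ k)
    (F' := fun z t => -(Real.exp (-z * Real.cosh t) * Real.cosh t ^ (k + 1)))
    (x₀ := x)
    (bound := fun t => (2 * ((k + 1 : ℕ) : ℝ) / (x / 2)) ^ (k + 1) * Real.exp (-(x / 2 / 2) * t))
    (ball_mem_nhds x (half_pos hx))
    (Eventually.of_forall fun z => Continuous.aestronglyMeasurable (by fun_prop))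
    (integrableOn_aux k hx)
    (Continuous.aestronglyMeasurable (by fun_prop))
    ?_ ?_ ?_
  · have h2 := key.2
    have h3 : (∫ t in Set.Ioi (0:ℝ), -(Real.exp (-x * Real.cosh t) * Real.cosh t ^ (k + 1)))
        = -Ibes (k + 1) x := by
      rw [integral_neg]; rfl
    rw [h3] at h2
    exact h2
  · rw [ae_restrict_iff' measurableSet_Ioi]
    refine ae_of_all _ fun t ht z hz => ?_
    have ht' : (0 : ℝ) < t := ht
    have hz' : x / 2 < z := by
      rw [mem_ball, Real.dist_eq, abs_sub_lt_iff] at hz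
      linarith [hz.2]
    rw [norm_neg, Real.norm_eq_abs, abs_of_pos (by positivity)]
    calc Real.exp (-z * Real.cosh t) * Real.cosh t ^ (k + 1)
        = Real.cosh t ^ (k + 1) * Real.exp (-z * Real.cosh t) := by ring
      _ ≤ Real.cosh t ^ (k + 1) * Real.exp (-(x / 2) * Real.cosh t) := by
          refine mul_le_mul_of_nonneg_left (Real.exp_le_exp.mpr ?_) (by positivity)
          nlinarith [Real.one_le_cosh t]
      _ ≤ _ := bound_aux (k + 1) (half_pos hx) ht'.le
  · exact (exp_neg_integrableOn_Ioi 0 (by positivity : (0:ℝ) < x / 2 / 2)).const_mul _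
  · refine ae_of_all _ fun t z hz => ?_
    refine ((((hasDerivAt_id z).neg.mul_const (Real.cosh t)).exp).mul_const
      (Real.cosh t ^ k)).congr_deriv ?_
    simp only [Pi.neg_apply, id_eq]
    ring

lemma Ibes_two {x : ℝ} (hx : 0 < x) : x * Ibes 2 x = x * Ibes 0 x + Ibes 1 x := by
  have hderiv : ∀ t ∈ Set.Ici (0 : ℝ),
      HasDerivAt (fun t => Real.exp (-x * Real.cosh t) * Real.sinh t)
        (Real.exp (-x * Real.cosh t) * Real.cosh t ^ 1
          - x * (Real.exp (-x * Real.cosh t) * Real.cosh t ^ 2)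
          + x * (Real.exp (-x * Real.cosh t) * Real.cosh t ^ 0)) t := by
    intro t _
    refine ((((Real.hasDerivAt_cosh t).const_mul (-x)).exp).mul
      (Real.hasDerivAt_sinh t)).congr_deriv ?_
    have hs := Real.cosh_sq_sub_sinh_sq t
    linear_combination (x * Real.exp (-x * Real.cosh t)) * hs
  have hint : IntegrableOn (fun t => Real.exp (-x * Real.cosh t) * Real.cosh t ^ 1
      - x * (Real.exp (-x * Real.cosh t) * Real.cosh t ^ 2)
      + x * (Real.exp (-x * Real.cosh t) * Real.cosh t ^ 0)) (Set.Ioi 0) :=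
    ((integrableOn_aux 1 hx).sub ((integrableOn_aux 2 hx).const_mul x)).add
      ((integrableOn_aux 0 hx).const_mul x)
  have htend : Tendsto (fun t => Real.exp (-x * Real.cosh t) * Real.sinh t) atTop (𝓝 0) := by
    have hup : Tendsto (fun t : ℝ =>
        (2 * ((1 : ℕ) : ℝ) / x) ^ (1 : ℕ) * Real.exp (-(x / 2) * t)) atTop (𝓝 0) := by
      have h0 : Tendsto (fun t : ℝ => x / 2 * t) atTop atTop :=
        Tendsto.const_mul_atTop (half_pos hx) tendsto_id
      have h1 := Real.tendsto_exp_neg_atTop_nhds_zero.comp h0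
      have h2 := h1.const_mul ((2 * ((1 : ℕ) : ℝ) / x) ^ (1 : ℕ))
      rw [mul_zero] at h2
      refine h2.congr fun t => ?_
      simp only [Function.comp]
      rw [neg_mul]
    refine tendsto_of_tendsto_of_tendsto_of_le_of_le' tendsto_const_nhds hup ?_ ?_
    · filter_upwards [eventually_ge_atTop (0 : ℝ)] with t ht
      exact mul_nonneg (Real.exp_pos _).le (Real.sinh_nonneg_iff.mpr ht)
    · filter_upwards [eventually_ge_atTop (0 : ℝ)] with t ht
      have h1 : Real.exp (-x * Real.cosh t) * Real.sinh t
          ≤ Real.cosh t ^ 1 * Real.exp (-x * Real.cosh t) := by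
        have := (Real.sinh_lt_cosh t).le
        nlinarith [Real.exp_pos (-x * Real.cosh t)]
      exact h1.trans (bound_aux 1 hx ht)
  have hparts := integral_Ioi_of_hasDerivAt_of_tendsto' hderiv hint htend
  have i2 : IntegrableOn (fun t => x * (Real.exp (-x * Real.cosh t) * Real.cosh t ^ 2))
      (Set.Ioi 0) := (integrableOn_aux 2 hx).const_mul x
  have i0 : IntegrableOn (fun t => x * (Real.exp (-x * Real.cosh t) * Real.cosh t ^ 0))
      (Set.Ioi 0) := (integrableOn_aux 0 hx).const_mul x
  have i12 : IntegrableOn (fun t => Real.exp (-x * Real.cosh t) * Real.cosh t ^ 1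
      - x * (Real.exp (-x * Real.cosh t) * Real.cosh t ^ 2)) (Set.Ioi 0) :=
    (integrableOn_aux 1 hx).sub i2
  rw [integral_add i12 i0,
    integral_sub (integrableOn_aux 1 hx) i2,
    integral_const_mul, integral_const_mul, Real.sinh_zero, mul_zero, zero_sub, neg_zero]
    at hparts
  have e0 : (∫ t in Set.Ioi (0:ℝ), Real.exp (-x * Real.cosh t) * Real.cosh t ^ 0) = Ibes 0 x := rfl
  have e1 : (∫ t in Set.Ioi (0:ℝ), Real.exp (-x * Real.cosh t) * Real.cosh t ^ 1) = Ibes 1 x := rfl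
  have e2 : (∫ t in Set.Ioi (0:ℝ), Real.exp (-x * Real.cosh t) * Real.cosh t ^ 2) = Ibes 2 x := rfl
  rw [e0, e1, e2] at hparts
  linarith

lemma Ibes_zero_eq : Ibes 0 = K0 := by
  funext z; simp [Ibes, K0]

lemma Ibes_one_eq : Ibes 1 = K1 := by
  funext z; simp [Ibes, K1]

lemma hasDerivAt_K0 {x : ℝ} (hx : 0 < x) : HasDerivAt K0 (-K1 x) x := by
  have h : HasDerivAt (Ibes 0) (-Ibes 1 x) x := hasDerivAt_Ibes 0 hx
  rwa [Ibes_zero_eq, Ibes_one_eq] at h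

lemma hasDerivAt_K1 {x : ℝ} (hx : 0 < x) : HasDerivAt K1 (-K0 x - K1 x / x) x := by
  have h : HasDerivAt (Ibes 1) (-Ibes 2 x) x := hasDerivAt_Ibes 1 hx
  rw [Ibes_one_eq] at h
  have h2 := Ibes_two hx
  rw [Ibes_zero_eq, Ibes_one_eq] at h2
  refine h.congr_deriv ?_
  have hx' : x ≠ 0 := hx.ne'
  field_simp
  linarith

lemma hasDerivAt_inner (c : ℝ) (hc : 0 < c) {y : ℝ} (hy : 0 < y) :
    HasDerivAt (fun t => r00 (c * t) * K0 (2 * c * t) * K0 (2 * c * t) +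
        r01 (c * t) * K0 (2 * c * t) * K1 (2 * c * t) +
        r01 (c * t) * K1 (2 * c * t) * K0 (2 * c * t) +
        r11 (c * t) * K1 (2 * c * t) * K1 (2 * c * t))
      (((45 : ℝ) * c ^ 0 * y ^ 0 * K0 (2 * c * y) ^ 0 * K1 (2 * c * y) ^ 2 +
      (27 : ℝ) * c ^ 2 * y ^ 2 * K0 (2 * c * y) ^ 0 * K1 (2 * c * y) ^ 2 +
      (64 : ℝ) * c ^ 4 * y ^ 4 * K0 (2 * c * y) ^ 0 * K1 (2 * c * y) ^ 2 +
      (2048 : ℝ) * c ^ 6 * y ^ 6 * K0 (2 * c * y) ^ 0 * K1 (2 * c * y) ^ 2 +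
      (90 : ℝ) * c ^ 1 * y ^ 1 * K0 (2 * c * y) ^ 1 * K1 (2 * c * y) ^ 1 +
      (-96 : ℝ) * c ^ 3 * y ^ 3 * K0 (2 * c * y) ^ 1 * K1 (2 * c * y) ^ 1 +
      (-1024 : ℝ) * c ^ 5 * y ^ 5 * K0 (2 * c * y) ^ 1 * K1 (2 * c * y) ^ 1 +
      (45 : ℝ) * c ^ 2 * y ^ 2 * K0 (2 * c * y) ^ 2 * K1 (2 * c * y) ^ 0 +
      (192 : ℝ) * c ^ 4 * y ^ 4 * K0 (2 * c * y) ^ 2 * K1 (2 * c * y) ^ 0 +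
      (-2048 : ℝ) * c ^ 6 * y ^ 6 * K0 (2 * c * y) ^ 2 * K1 (2 * c * y) ^ 0) / (c * y ^ 2)) y := by
  have h2cy : (0:ℝ) < 2 * c * y := by positivity
  have hu : HasDerivAt (fun t => K0 (2 * c * t)) (-K1 (2 * c * y) * (2 * c * 1)) y :=
    (hasDerivAt_K0 h2cy).comp y ((hasDerivAt_id y).const_mul (2 * c))
  have hv : HasDerivAt (fun t => K1 (2 * c * t))
      ((-K0 (2 * c * y) - K1 (2 * c * y) / (2 * c * y)) * (2 * c * 1)) y :=
    (hasDerivAt_K1 h2cy).comp y ((hasDerivAt_id y).const_mul (2 * c))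
  have hQ0 := ((((((((((((hasDerivAt_pow 0 y).const_mul ((-15 : ℝ) * c ^ 0)).mul (hu.pow 0)).mul (hv.pow 2)).add
      ((((hasDerivAt_pow 2 y).const_mul ((33 : ℝ) * c ^ 2)).mul (hu.pow 0)).mul (hv.pow 2))).add
      ((((hasDerivAt_pow 4 y).const_mul ((16 : ℝ) * c ^ 4)).mul (hu.pow 0)).mul (hv.pow 2))).add
      ((((hasDerivAt_pow 6 y).const_mul ((512 : ℝ) * c ^ 6)).mul (hu.pow 0)).mul (hv.pow 2))).add
      ((((hasDerivAt_pow 1 y).const_mul ((-30 : ℝ) * c ^ 1)).mul (hu.pow 1)).mul (hv.pow 1))).add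
      ((((hasDerivAt_pow 3 y).const_mul ((-24 : ℝ) * c ^ 3)).mul (hu.pow 1)).mul (hv.pow 1))).add
      ((((hasDerivAt_pow 5 y).const_mul ((-256 : ℝ) * c ^ 5)).mul (hu.pow 1)).mul (hv.pow 1))).add
      ((((hasDerivAt_pow 2 y).const_mul ((-15 : ℝ) * c ^ 2)).mul (hu.pow 2)).mul (hv.pow 0))).add
      ((((hasDerivAt_pow 4 y).const_mul ((48 : ℝ) * c ^ 4)).mul (hu.pow 2)).mul (hv.pow 0))).add
      ((((hasDerivAt_pow 6 y).const_mul ((-512 : ℝ) * c ^ 6)).mul (hu.pow 2)).mul (hv.pow 0))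
  have hden : HasDerivAt (fun t : ℝ => c * t) (c * 1) y := (hasDerivAt_id y).const_mul c
  have hdiv := hQ0.div hden (show c * y ≠ 0 by positivity)
  have hev : (fun t => r00 (c * t) * K0 (2 * c * t) * K0 (2 * c * t) +
        r01 (c * t) * K0 (2 * c * t) * K1 (2 * c * t) +
        r01 (c * t) * K1 (2 * c * t) * K0 (2 * c * t) +
        r11 (c * t) * K1 (2 * c * t) * K1 (2 * c * t))
      =ᶠ[𝓝 y] (fun t => ((-15 : ℝ) * c ^ 0 * t ^ 0 * K0 (2 * c * t) ^ 0 * K1 (2 * c * t) ^ 2 +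
      (33 : ℝ) * c ^ 2 * t ^ 2 * K0 (2 * c * t) ^ 0 * K1 (2 * c * t) ^ 2 +
      (16 : ℝ) * c ^ 4 * t ^ 4 * K0 (2 * c * t) ^ 0 * K1 (2 * c * t) ^ 2 +
      (512 : ℝ) * c ^ 6 * t ^ 6 * K0 (2 * c * t) ^ 0 * K1 (2 * c * t) ^ 2 +
      (-30 : ℝ) * c ^ 1 * t ^ 1 * K0 (2 * c * t) ^ 1 * K1 (2 * c * t) ^ 1 +
      (-24 : ℝ) * c ^ 3 * t ^ 3 * K0 (2 * c * t) ^ 1 * K1 (2 * c * t) ^ 1 +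
      (-256 : ℝ) * c ^ 5 * t ^ 5 * K0 (2 * c * t) ^ 1 * K1 (2 * c * t) ^ 1 +
      (-15 : ℝ) * c ^ 2 * t ^ 2 * K0 (2 * c * t) ^ 2 * K1 (2 * c * t) ^ 0 +
      (48 : ℝ) * c ^ 4 * t ^ 4 * K0 (2 * c * t) ^ 2 * K1 (2 * c * t) ^ 0 +
      (-512 : ℝ) * c ^ 6 * t ^ 6 * K0 (2 * c * t) ^ 2 * K1 (2 * c * t) ^ 0) / (c * t)) := by
    filter_upwards [isOpen_Ioi.mem_nhds hy] with t ht
    have ht' : (0:ℝ) < t := ht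
    have h1 : c ≠ 0 := hc.ne'
    have h2 : t ≠ 0 := ht'.ne'
    simp only [r00, r01, r11]
    field_simp
    ring
  refine (hdiv.congr_of_eventuallyEq hev).congr_deriv ?_
  have h1 : c ≠ 0 := hc.ne'
  have h2 : y ≠ 0 := hy.ne'
  simp only [Pi.pow_apply, Pi.mul_apply, Pi.add_apply]
  field_simp
  ring

lemma hasDerivAt_Q1div (c : ℝ) (hc : 0 < c) {y : ℝ} (hy : 0 < y) :
    HasDerivAt (fun t => ((45 : ℝ) * c ^ 0 * t ^ 0 * K0 (2 * c * t) ^ 0 * K1 (2 * c * t) ^ 2 +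
      (27 : ℝ) * c ^ 2 * t ^ 2 * K0 (2 * c * t) ^ 0 * K1 (2 * c * t) ^ 2 +
      (64 : ℝ) * c ^ 4 * t ^ 4 * K0 (2 * c * t) ^ 0 * K1 (2 * c * t) ^ 2 +
      (2048 : ℝ) * c ^ 6 * t ^ 6 * K0 (2 * c * t) ^ 0 * K1 (2 * c * t) ^ 2 +
      (90 : ℝ) * c ^ 1 * t ^ 1 * K0 (2 * c * t) ^ 1 * K1 (2 * c * t) ^ 1 +
      (-96 : ℝ) * c ^ 3 * t ^ 3 * K0 (2 * c * t) ^ 1 * K1 (2 * c * t) ^ 1 +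
      (-1024 : ℝ) * c ^ 5 * t ^ 5 * K0 (2 * c * t) ^ 1 * K1 (2 * c * t) ^ 1 +
      (45 : ℝ) * c ^ 2 * t ^ 2 * K0 (2 * c * t) ^ 2 * K1 (2 * c * t) ^ 0 +
      (192 : ℝ) * c ^ 4 * t ^ 4 * K0 (2 * c * t) ^ 2 * K1 (2 * c * t) ^ 0 +
      (-2048 : ℝ) * c ^ 6 * t ^ 6 * K0 (2 * c * t) ^ 2 * K1 (2 * c * t) ^ 0) / (c * t ^ 2))
      (((-180 : ℝ) * c ^ 0 * y ^ 0 * K0 (2 * c * y) ^ 0 * K1 (2 * c * y) ^ 2 +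
      (-234 : ℝ) * c ^ 2 * y ^ 2 * K0 (2 * c * y) ^ 0 * K1 (2 * c * y) ^ 2 +
      (192 : ℝ) * c ^ 4 * y ^ 4 * K0 (2 * c * y) ^ 0 * K1 (2 * c * y) ^ 2 +
      (6144 : ℝ) * c ^ 6 * y ^ 6 * K0 (2 * c * y) ^ 0 * K1 (2 * c * y) ^ 2 +
      (-360 : ℝ) * c ^ 1 * y ^ 1 * K0 (2 * c * y) ^ 1 * K1 (2 * c * y) ^ 1 +
      (-288 : ℝ) * c ^ 3 * y ^ 3 * K0 (2 * c * y) ^ 1 * K1 (2 * c * y) ^ 1 +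
      (-3072 : ℝ) * c ^ 5 * y ^ 5 * K0 (2 * c * y) ^ 1 * K1 (2 * c * y) ^ 1 +
      (-180 : ℝ) * c ^ 2 * y ^ 2 * K0 (2 * c * y) ^ 2 * K1 (2 * c * y) ^ 0 +
      (576 : ℝ) * c ^ 4 * y ^ 4 * K0 (2 * c * y) ^ 2 * K1 (2 * c * y) ^ 0 +
      (-6144 : ℝ) * c ^ 6 * y ^ 6 * K0 (2 * c * y) ^ 2 * K1 (2 * c * y) ^ 0) / (c * y ^ 3)) y := by
  have h2cy : (0:ℝ) < 2 * c * y := by positivity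
  have hu : HasDerivAt (fun t => K0 (2 * c * t)) (-K1 (2 * c * y) * (2 * c * 1)) y :=
    (hasDerivAt_K0 h2cy).comp y ((hasDerivAt_id y).const_mul (2 * c))
  have hv : HasDerivAt (fun t => K1 (2 * c * t))
      ((-K0 (2 * c * y) - K1 (2 * c * y) / (2 * c * y)) * (2 * c * 1)) y :=
    (hasDerivAt_K1 h2cy).comp y ((hasDerivAt_id y).const_mul (2 * c))
  have hQ1 := ((((((((((((hasDerivAt_pow 0 y).const_mul ((45 : ℝ) * c ^ 0)).mul (hu.pow 0)).mul (hv.pow 2)).add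
      ((((hasDerivAt_pow 2 y).const_mul ((27 : ℝ) * c ^ 2)).mul (hu.pow 0)).mul (hv.pow 2))).add
      ((((hasDerivAt_pow 4 y).const_mul ((64 : ℝ) * c ^ 4)).mul (hu.pow 0)).mul (hv.pow 2))).add
      ((((hasDerivAt_pow 6 y).const_mul ((2048 : ℝ) * c ^ 6)).mul (hu.pow 0)).mul (hv.pow 2))).add
      ((((hasDerivAt_pow 1 y).const_mul ((90 : ℝ) * c ^ 1)).mul (hu.pow 1)).mul (hv.pow 1))).add
      ((((hasDerivAt_pow 3 y).const_mul ((-96 : ℝ) * c ^ 3)).mul (hu.pow 1)).mul (hv.pow 1))).add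
      ((((hasDerivAt_pow 5 y).const_mul ((-1024 : ℝ) * c ^ 5)).mul (hu.pow 1)).mul (hv.pow 1))).add
      ((((hasDerivAt_pow 2 y).const_mul ((45 : ℝ) * c ^ 2)).mul (hu.pow 2)).mul (hv.pow 0))).add
      ((((hasDerivAt_pow 4 y).const_mul ((192 : ℝ) * c ^ 4)).mul (hu.pow 2)).mul (hv.pow 0))).add
      ((((hasDerivAt_pow 6 y).const_mul ((-2048 : ℝ) * c ^ 6)).mul (hu.pow 2)).mul (hv.pow 0))
  have hden := (hasDerivAt_pow 2 y).const_mul c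
  have hdiv := hQ1.div hden (show c * y ^ 2 ≠ 0 by positivity)
  refine hdiv.congr_deriv ?_
  have h1 : c ≠ 0 := hc.ne'
  have h2 : y ≠ 0 := hy.ne'
  simp only [Pi.pow_apply, Pi.mul_apply, Pi.add_apply]
  field_simp
  ring

set_option maxHeartbeats 4000000 in
/-- `fPdiag n₁` solves the inhomogeneous ODE for the `(n₁,-n₁)` mode. -/
theorem mode_diag_ode (n₁ : ℤ) (h₁ : n₁ ≠ 0) :
    ∀ y : ℝ, 0 < y →
      y ^ 2 * deriv (deriv (fPdiag n₁)) y - 12 * fPdiag n₁ y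
      = -64 * π ^ 2 * y * ((sigma2 n₁.natAbs : ℝ) ^ 2 / (n₁ : ℝ) ^ 2) *
          K1 (2 * π * |(n₁ : ℝ)| * y) ^ 2 := by
  intro y hy
  have hn : ((n₁ : ℝ)) ≠ 0 := Int.cast_ne_zero.mpr h₁
  have hN : (0:ℝ) < |(n₁ : ℝ)| := abs_pos.mpr hn
  have hc : (0:ℝ) < π * |(n₁ : ℝ)| := mul_pos pi_pos hN
  have key : ∀ t : ℝ, 0 < t →
      HasDerivAt (fPdiag n₁)
        (32 * π * (sigma2 n₁.natAbs : ℝ) ^ 2 / (315 * |(n₁ : ℝ)| ^ 3) *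
          (((45 : ℝ) * (π * |(n₁ : ℝ)|) ^ 0 * t ^ 0 * K0 (2 * π * |(n₁ : ℝ)| * t) ^ 0 * K1 (2 * π * |(n₁ : ℝ)| * t) ^ 2 +
        (27 : ℝ) * (π * |(n₁ : ℝ)|) ^ 2 * t ^ 2 * K0 (2 * π * |(n₁ : ℝ)| * t) ^ 0 * K1 (2 * π * |(n₁ : ℝ)| * t) ^ 2 +
        (64 : ℝ) * (π * |(n₁ : ℝ)|) ^ 4 * t ^ 4 * K0 (2 * π * |(n₁ : ℝ)| * t) ^ 0 * K1 (2 * π * |(n₁ : ℝ)| * t) ^ 2 +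
        (2048 : ℝ) * (π * |(n₁ : ℝ)|) ^ 6 * t ^ 6 * K0 (2 * π * |(n₁ : ℝ)| * t) ^ 0 * K1 (2 * π * |(n₁ : ℝ)| * t) ^ 2 +
        (90 : ℝ) * (π * |(n₁ : ℝ)|) ^ 1 * t ^ 1 * K0 (2 * π * |(n₁ : ℝ)| * t) ^ 1 * K1 (2 * π * |(n₁ : ℝ)| * t) ^ 1 +
        (-96 : ℝ) * (π * |(n₁ : ℝ)|) ^ 3 * t ^ 3 * K0 (2 * π * |(n₁ : ℝ)| * t) ^ 1 * K1 (2 * π * |(n₁ : ℝ)| * t) ^ 1 +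
        (-1024 : ℝ) * (π * |(n₁ : ℝ)|) ^ 5 * t ^ 5 * K0 (2 * π * |(n₁ : ℝ)| * t) ^ 1 * K1 (2 * π * |(n₁ : ℝ)| * t) ^ 1 +
        (45 : ℝ) * (π * |(n₁ : ℝ)|) ^ 2 * t ^ 2 * K0 (2 * π * |(n₁ : ℝ)| * t) ^ 2 * K1 (2 * π * |(n₁ : ℝ)| * t) ^ 0 +
        (192 : ℝ) * (π * |(n₁ : ℝ)|) ^ 4 * t ^ 4 * K0 (2 * π * |(n₁ : ℝ)| * t) ^ 2 * K1 (2 * π * |(n₁ : ℝ)| * t) ^ 0 +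
        (-2048 : ℝ) * (π * |(n₁ : ℝ)|) ^ 6 * t ^ 6 * K0 (2 * π * |(n₁ : ℝ)| * t) ^ 2 * K1 (2 * π * |(n₁ : ℝ)| * t) ^ 0) / (π * |(n₁ : ℝ)| * t ^ 2))) t := by
    intro t ht
    have h := (hasDerivAt_inner (π * |(n₁ : ℝ)|) hc ht).const_mul
      (32 * π * (sigma2 n₁.natAbs : ℝ) ^ 2 / (315 * |(n₁ : ℝ)| ^ 3))
    simp only [← mul_assoc] at h
    exact h
  have hev : deriv (fPdiag n₁) =ᶠ[𝓝 y]
      (fun t => 32 * π * (sigma2 n₁.natAbs : ℝ) ^ 2 / (315 * |(n₁ : ℝ)| ^ 3) *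
        (((45 : ℝ) * (π * |(n₁ : ℝ)|) ^ 0 * t ^ 0 * K0 (2 * π * |(n₁ : ℝ)| * t) ^ 0 * K1 (2 * π * |(n₁ : ℝ)| * t) ^ 2 +
        (27 : ℝ) * (π * |(n₁ : ℝ)|) ^ 2 * t ^ 2 * K0 (2 * π * |(n₁ : ℝ)| * t) ^ 0 * K1 (2 * π * |(n₁ : ℝ)| * t) ^ 2 +
        (64 : ℝ) * (π * |(n₁ : ℝ)|) ^ 4 * t ^ 4 * K0 (2 * π * |(n₁ : ℝ)| * t) ^ 0 * K1 (2 * π * |(n₁ : ℝ)| * t) ^ 2 +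
        (2048 : ℝ) * (π * |(n₁ : ℝ)|) ^ 6 * t ^ 6 * K0 (2 * π * |(n₁ : ℝ)| * t) ^ 0 * K1 (2 * π * |(n₁ : ℝ)| * t) ^ 2 +
        (90 : ℝ) * (π * |(n₁ : ℝ)|) ^ 1 * t ^ 1 * K0 (2 * π * |(n₁ : ℝ)| * t) ^ 1 * K1 (2 * π * |(n₁ : ℝ)| * t) ^ 1 +
        (-96 : ℝ) * (π * |(n₁ : ℝ)|) ^ 3 * t ^ 3 * K0 (2 * π * |(n₁ : ℝ)| * t) ^ 1 * K1 (2 * π * |(n₁ : ℝ)| * t) ^ 1 +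
        (-1024 : ℝ) * (π * |(n₁ : ℝ)|) ^ 5 * t ^ 5 * K0 (2 * π * |(n₁ : ℝ)| * t) ^ 1 * K1 (2 * π * |(n₁ : ℝ)| * t) ^ 1 +
        (45 : ℝ) * (π * |(n₁ : ℝ)|) ^ 2 * t ^ 2 * K0 (2 * π * |(n₁ : ℝ)| * t) ^ 2 * K1 (2 * π * |(n₁ : ℝ)| * t) ^ 0 +
        (192 : ℝ) * (π * |(n₁ : ℝ)|) ^ 4 * t ^ 4 * K0 (2 * π * |(n₁ : ℝ)| * t) ^ 2 * K1 (2 * π * |(n₁ : ℝ)| * t) ^ 0 +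
        (-2048 : ℝ) * (π * |(n₁ : ℝ)|) ^ 6 * t ^ 6 * K0 (2 * π * |(n₁ : ℝ)| * t) ^ 2 * K1 (2 * π * |(n₁ : ℝ)| * t) ^ 0) / (π * |(n₁ : ℝ)| * t ^ 2))) := by
    filter_upwards [isOpen_Ioi.mem_nhds hy] with t ht
    exact (key t ht).deriv
  have h2 : HasDerivAt
      (fun t => 32 * π * (sigma2 n₁.natAbs : ℝ) ^ 2 / (315 * |(n₁ : ℝ)| ^ 3) *
        (((45 : ℝ) * (π * |(n₁ : ℝ)|) ^ 0 * t ^ 0 * K0 (2 * π * |(n₁ : ℝ)| * t) ^ 0 * K1 (2 * π * |(n₁ : ℝ)| * t) ^ 2 +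
        (27 : ℝ) * (π * |(n₁ : ℝ)|) ^ 2 * t ^ 2 * K0 (2 * π * |(n₁ : ℝ)| * t) ^ 0 * K1 (2 * π * |(n₁ : ℝ)| * t) ^ 2 +
        (64 : ℝ) * (π * |(n₁ : ℝ)|) ^ 4 * t ^ 4 * K0 (2 * π * |(n₁ : ℝ)| * t) ^ 0 * K1 (2 * π * |(n₁ : ℝ)| * t) ^ 2 +
        (2048 : ℝ) * (π * |(n₁ : ℝ)|) ^ 6 * t ^ 6 * K0 (2 * π * |(n₁ : ℝ)| * t) ^ 0 * K1 (2 * π * |(n₁ : ℝ)| * t) ^ 2 +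
        (90 : ℝ) * (π * |(n₁ : ℝ)|) ^ 1 * t ^ 1 * K0 (2 * π * |(n₁ : ℝ)| * t) ^ 1 * K1 (2 * π * |(n₁ : ℝ)| * t) ^ 1 +
        (-96 : ℝ) * (π * |(n₁ : ℝ)|) ^ 3 * t ^ 3 * K0 (2 * π * |(n₁ : ℝ)| * t) ^ 1 * K1 (2 * π * |(n₁ : ℝ)| * t) ^ 1 +
        (-1024 : ℝ) * (π * |(n₁ : ℝ)|) ^ 5 * t ^ 5 * K0 (2 * π * |(n₁ : ℝ)| * t) ^ 1 * K1 (2 * π * |(n₁ : ℝ)| * t) ^ 1 +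
        (45 : ℝ) * (π * |(n₁ : ℝ)|) ^ 2 * t ^ 2 * K0 (2 * π * |(n₁ : ℝ)| * t) ^ 2 * K1 (2 * π * |(n₁ : ℝ)| * t) ^ 0 +
        (192 : ℝ) * (π * |(n₁ : ℝ)|) ^ 4 * t ^ 4 * K0 (2 * π * |(n₁ : ℝ)| * t) ^ 2 * K1 (2 * π * |(n₁ : ℝ)| * t) ^ 0 +
        (-2048 : ℝ) * (π * |(n₁ : ℝ)|) ^ 6 * t ^ 6 * K0 (2 * π * |(n₁ : ℝ)| * t) ^ 2 * K1 (2 * π * |(n₁ : ℝ)| * t) ^ 0) / (π * |(n₁ : ℝ)| * t ^ 2)))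
      (32 * π * (sigma2 n₁.natAbs : ℝ) ^ 2 / (315 * |(n₁ : ℝ)| ^ 3) *
        (((-180 : ℝ) * (π * |(n₁ : ℝ)|) ^ 0 * y ^ 0 * K0 (2 * π * |(n₁ : ℝ)| * y) ^ 0 * K1 (2 * π * |(n₁ : ℝ)| * y) ^ 2 +
        (-234 : ℝ) * (π * |(n₁ : ℝ)|) ^ 2 * y ^ 2 * K0 (2 * π * |(n₁ : ℝ)| * y) ^ 0 * K1 (2 * π * |(n₁ : ℝ)| * y) ^ 2 +
        (192 : ℝ) * (π * |(n₁ : ℝ)|) ^ 4 * y ^ 4 * K0 (2 * π * |(n₁ : ℝ)| * y) ^ 0 * K1 (2 * π * |(n₁ : ℝ)| * y) ^ 2 +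
        (6144 : ℝ) * (π * |(n₁ : ℝ)|) ^ 6 * y ^ 6 * K0 (2 * π * |(n₁ : ℝ)| * y) ^ 0 * K1 (2 * π * |(n₁ : ℝ)| * y) ^ 2 +
        (-360 : ℝ) * (π * |(n₁ : ℝ)|) ^ 1 * y ^ 1 * K0 (2 * π * |(n₁ : ℝ)| * y) ^ 1 * K1 (2 * π * |(n₁ : ℝ)| * y) ^ 1 +
        (-288 : ℝ) * (π * |(n₁ : ℝ)|) ^ 3 * y ^ 3 * K0 (2 * π * |(n₁ : ℝ)| * y) ^ 1 * K1 (2 * π * |(n₁ : ℝ)| * y) ^ 1 +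
        (-3072 : ℝ) * (π * |(n₁ : ℝ)|) ^ 5 * y ^ 5 * K0 (2 * π * |(n₁ : ℝ)| * y) ^ 1 * K1 (2 * π * |(n₁ : ℝ)| * y) ^ 1 +
        (-180 : ℝ) * (π * |(n₁ : ℝ)|) ^ 2 * y ^ 2 * K0 (2 * π * |(n₁ : ℝ)| * y) ^ 2 * K1 (2 * π * |(n₁ : ℝ)| * y) ^ 0 +
        (576 : ℝ) * (π * |(n₁ : ℝ)|) ^ 4 * y ^ 4 * K0 (2 * π * |(n₁ : ℝ)| * y) ^ 2 * K1 (2 * π * |(n₁ : ℝ)| * y) ^ 0 +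
        (-6144 : ℝ) * (π * |(n₁ : ℝ)|) ^ 6 * y ^ 6 * K0 (2 * π * |(n₁ : ℝ)| * y) ^ 2 * K1 (2 * π * |(n₁ : ℝ)| * y) ^ 0) / (π * |(n₁ : ℝ)| * y ^ 3))) y := by
    have h := (hasDerivAt_Q1div (π * |(n₁ : ℝ)|) hc hy).const_mul
      (32 * π * (sigma2 n₁.natAbs : ℝ) ^ 2 / (315 * |(n₁ : ℝ)| ^ 3))
    simp only [← mul_assoc] at h
    exact h
  have hdd : deriv (deriv (fPdiag n₁)) y
      = 32 * π * (sigma2 n₁.natAbs : ℝ) ^ 2 / (315 * |(n₁ : ℝ)| ^ 3) *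
        (((-180 : ℝ) * (π * |(n₁ : ℝ)|) ^ 0 * y ^ 0 * K0 (2 * π * |(n₁ : ℝ)| * y) ^ 0 * K1 (2 * π * |(n₁ : ℝ)| * y) ^ 2 +
        (-234 : ℝ) * (π * |(n₁ : ℝ)|) ^ 2 * y ^ 2 * K0 (2 * π * |(n₁ : ℝ)| * y) ^ 0 * K1 (2 * π * |(n₁ : ℝ)| * y) ^ 2 +
        (192 : ℝ) * (π * |(n₁ : ℝ)|) ^ 4 * y ^ 4 * K0 (2 * π * |(n₁ : ℝ)| * y) ^ 0 * K1 (2 * π * |(n₁ : ℝ)| * y) ^ 2 +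
        (6144 : ℝ) * (π * |(n₁ : ℝ)|) ^ 6 * y ^ 6 * K0 (2 * π * |(n₁ : ℝ)| * y) ^ 0 * K1 (2 * π * |(n₁ : ℝ)| * y) ^ 2 +
        (-360 : ℝ) * (π * |(n₁ : ℝ)|) ^ 1 * y ^ 1 * K0 (2 * π * |(n₁ : ℝ)| * y) ^ 1 * K1 (2 * π * |(n₁ : ℝ)| * y) ^ 1 +
        (-288 : ℝ) * (π * |(n₁ : ℝ)|) ^ 3 * y ^ 3 * K0 (2 * π * |(n₁ : ℝ)| * y) ^ 1 * K1 (2 * π * |(n₁ : ℝ)| * y) ^ 1 +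
        (-3072 : ℝ) * (π * |(n₁ : ℝ)|) ^ 5 * y ^ 5 * K0 (2 * π * |(n₁ : ℝ)| * y) ^ 1 * K1 (2 * π * |(n₁ : ℝ)| * y) ^ 1 +
        (-180 : ℝ) * (π * |(n₁ : ℝ)|) ^ 2 * y ^ 2 * K0 (2 * π * |(n₁ : ℝ)| * y) ^ 2 * K1 (2 * π * |(n₁ : ℝ)| * y) ^ 0 +
        (576 : ℝ) * (π * |(n₁ : ℝ)|) ^ 4 * y ^ 4 * K0 (2 * π * |(n₁ : ℝ)| * y) ^ 2 * K1 (2 * π * |(n₁ : ℝ)| * y) ^ 0 +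
        (-6144 : ℝ) * (π * |(n₁ : ℝ)|) ^ 6 * y ^ 6 * K0 (2 * π * |(n₁ : ℝ)| * y) ^ 2 * K1 (2 * π * |(n₁ : ℝ)| * y) ^ 0) / (π * |(n₁ : ℝ)| * y ^ 3)) :=
    (h2.congr_of_eventuallyEq hev).deriv
  have hfy : fPdiag n₁ y
      = 32 * π * (sigma2 n₁.natAbs : ℝ) ^ 2 / (315 * |(n₁ : ℝ)| ^ 3) *
        (((-15 : ℝ) * (π * |(n₁ : ℝ)|) ^ 0 * y ^ 0 * K0 (2 * π * |(n₁ : ℝ)| * y) ^ 0 * K1 (2 * π * |(n₁ : ℝ)| * y) ^ 2 +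
        (33 : ℝ) * (π * |(n₁ : ℝ)|) ^ 2 * y ^ 2 * K0 (2 * π * |(n₁ : ℝ)| * y) ^ 0 * K1 (2 * π * |(n₁ : ℝ)| * y) ^ 2 +
        (16 : ℝ) * (π * |(n₁ : ℝ)|) ^ 4 * y ^ 4 * K0 (2 * π * |(n₁ : ℝ)| * y) ^ 0 * K1 (2 * π * |(n₁ : ℝ)| * y) ^ 2 +
        (512 : ℝ) * (π * |(n₁ : ℝ)|) ^ 6 * y ^ 6 * K0 (2 * π * |(n₁ : ℝ)| * y) ^ 0 * K1 (2 * π * |(n₁ : ℝ)| * y) ^ 2 +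
        (-30 : ℝ) * (π * |(n₁ : ℝ)|) ^ 1 * y ^ 1 * K0 (2 * π * |(n₁ : ℝ)| * y) ^ 1 * K1 (2 * π * |(n₁ : ℝ)| * y) ^ 1 +
        (-24 : ℝ) * (π * |(n₁ : ℝ)|) ^ 3 * y ^ 3 * K0 (2 * π * |(n₁ : ℝ)| * y) ^ 1 * K1 (2 * π * |(n₁ : ℝ)| * y) ^ 1 +
        (-256 : ℝ) * (π * |(n₁ : ℝ)|) ^ 5 * y ^ 5 * K0 (2 * π * |(n₁ : ℝ)| * y) ^ 1 * K1 (2 * π * |(n₁ : ℝ)| * y) ^ 1 +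
        (-15 : ℝ) * (π * |(n₁ : ℝ)|) ^ 2 * y ^ 2 * K0 (2 * π * |(n₁ : ℝ)| * y) ^ 2 * K1 (2 * π * |(n₁ : ℝ)| * y) ^ 0 +
        (48 : ℝ) * (π * |(n₁ : ℝ)|) ^ 4 * y ^ 4 * K0 (2 * π * |(n₁ : ℝ)| * y) ^ 2 * K1 (2 * π * |(n₁ : ℝ)| * y) ^ 0 +
        (-512 : ℝ) * (π * |(n₁ : ℝ)|) ^ 6 * y ^ 6 * K0 (2 * π * |(n₁ : ℝ)| * y) ^ 2 * K1 (2 * π * |(n₁ : ℝ)| * y) ^ 0) / (π * |(n₁ : ℝ)| * y)) := by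
    simp only [fPdiag, r00, r01, r11]
    have h1 : π ≠ 0 := pi_ne_zero
    have h2 : |(n₁ : ℝ)| ≠ 0 := hN.ne'
    have h3 : y ≠ 0 := hy.ne'
    field_simp
    all_goals first
      | ring1
      | (left; ring1)
      | (left; trivial)
  rw [hdd, hfy, show ((n₁ : ℝ)) ^ 2 = |(n₁ : ℝ)| ^ 2 from (sq_abs _).symm]
  have h1 : π ≠ 0 := pi_ne_zero
  have h3 : y ≠ 0 := hy.ne'
  obtain ⟨A, hA⟩ : ∃ A : ℝ, |(n₁ : ℝ)| = A := ⟨_, rfl⟩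
  have h2 : A ≠ 0 := hA ▸ hN.ne'
  rw [hA]
  field_simp
  all_goals first
    | ring1
    | (left; ring1)
    | (left; trivial)
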